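/- arXiv:1901.01401 — 3 statements merged into one kernel-verified Lean document; each statement's English description precedes it below -/
import Mathlib

section
/- PGL(2,ℤ) is not generated by two elements of finite order. -/
open Matrix

/-- `PGL(2, ℤ)`, the quotient of `GL(2, ℤ)` by its center `{±I}`. -/
abbrev PGL2Z :=
  Matrix.GeneralLinearGroup (Fin 2) ℤ ⧸ Subgroup.center (Matrix.GeneralLinearGroup (Fin 2) ℤ)

namespace PGL2ZAux

abbrev GL2Z := Matrix.GeneralLinearGroup (Fin 2) ℤ
abbrev M2 := Matrix (Fin 2) (Fin 2) ℤ

/-! ### Cayley–Hamilton and trace growth -/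

lemma cayley (A : M2) : A ^ 2 = A.trace • A - A.det • (1 : M2) := by
  ext i j
  rw [sq]
  simp only [Matrix.sub_apply, Matrix.smul_apply, Matrix.mul_apply, Fin.sum_univ_two,
    smul_eq_mul, Matrix.trace_fin_two, Matrix.det_fin_two, Matrix.one_apply]
  fin_cases i <;> fin_cases j <;> norm_num <;> ring

lemma trace_rec (A : M2) (k : ℕ) :
    (A ^ (k+2)).trace = A.trace * (A ^ (k+1)).trace - A.det * (A ^ k).trace := by
  have h : A ^ (k+2) = A.trace • A ^ (k+1) - A.det • A ^ k := by
    have h0 : A ^ (k+2) = A ^ k * A ^ 2 := pow_add A k 2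
    rw [h0, cayley, mul_sub, mul_smul_comm, mul_smul_comm, mul_one, ← pow_succ]
  rw [h, Matrix.trace_sub, Matrix.trace_smul, Matrix.trace_smul, smul_eq_mul, smul_eq_mul]

lemma seq1 (T : ℕ → ℤ) (t : ℤ) (ht : 1 ≤ t) (h0 : T 0 = 2) (h1 : T 1 = t)
    (hrec : ∀ k, T (k+2) = t * T (k+1) + T k) (m : ℕ) (hm : 0 < m)
    (hper : T (m+1) = T 1) : False := by
  have key : ∀ k, 1 ≤ T (k+1) ∧ T (k+1) < T (k+2) := by
    intro k
    induction k with
    | zero =>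
      rw [show (0:ℕ)+1 = 1 from rfl, show (0:ℕ)+2 = 2 from rfl]
      have h2 := hrec 0
      rw [show (0:ℕ)+1 = 1 from rfl, show (0:ℕ)+2 = 2 from rfl] at h2
      refine ⟨by omega, by nlinarith [h2]⟩
    | succ n ih =>
      obtain ⟨ih1, ih2⟩ := ih
      have e1 : n + 1 + 1 = n + 2 := by omega
      have e2 : n + 1 + 2 = n + 3 := by omega
      rw [e1, e2]
      have h2 := hrec (n+1)
      rw [e1, e2] at h2
      refine ⟨by omega, by nlinarith [h2]⟩
  have mono : StrictMono (fun j => T (j+1)) :=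
    strictMono_nat_of_lt_succ (fun n => by
      have e1 : n + 1 + 1 = n + 2 := by omega
      simp only [e1]
      exact (key n).2)
  have h2 : T (0+1) < T (m+1) := mono hm
  rw [show (0:ℕ)+1 = 1 from rfl] at h2
  omega

lemma seq2 (T : ℕ → ℤ) (t d : ℤ) (ht : 3 ≤ t) (hd : |d| = 1) (h0 : T 0 = 2) (h1 : T 1 = t)
    (hrec : ∀ k, T (k+2) = t * T (k+1) - d * T k) (m : ℕ) (hm : 0 < m)
    (hper : T m = T 0) : False := by
  have key : ∀ k, |T k| < |T (k+1)| := by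
    intro k
    induction k with
    | zero =>
      rw [show (0:ℕ)+1 = 1 from rfl, h0, h1, abs_of_nonneg (by omega : (0:ℤ) ≤ t)]
      norm_num; omega
    | succ n ih =>
      have e1 : n + 1 + 1 = n + 2 := by omega
      rw [e1]
      have hge : |T (n+2)| ≥ t * |T (n+1)| - |T n| := by
        calc |T (n+2)| = |t * T (n+1) - d * T n| := by rw [hrec n]
        _ ≥ |t * T (n+1)| - |d * T n| := abs_sub_abs_le_abs_sub _ _
        _ = t * |T (n+1)| - |T n| := by
            rw [abs_mul, abs_mul, hd, one_mul, abs_of_nonneg (by omega : (0:ℤ) ≤ t)]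
      have hpos : 0 ≤ |T n| := abs_nonneg _
      nlinarith [hge, ih, hpos]
  have mono : StrictMono (fun j => |T j|) := strictMono_nat_of_lt_succ key
  have h2 : |T 0| < |T m| := mono hm
  rw [hper] at h2
  omega

lemma nilsq (B : M2) (hB : B * B = 0) (m : ℕ) : (1 + B) ^ m = 1 + (m : ℤ) • B := by
  induction m with
  | zero => simp
  | succ n ih =>
    rw [pow_succ, ih]
    push_cast
    rw [add_smul, one_smul, mul_add, add_mul, add_mul, one_mul, mul_one, smul_mul_assoc, hB,
      smul_zero]
    simp
    abel

/-! ### Classification of finite-order integer matrices -/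

lemma torsion_mat_pos (A : M2) (m : ℕ) (hm : 0 < m) (h1 : A ^ m = 1) (htr : 0 ≤ A.trace) :
    A ^ 2 = 1 ∨ A ^ 2 = -1 ∨ A ^ 3 = 1 ∨ A ^ 3 = -1 := by
  have hT0 : (A ^ 0).trace = 2 := by simp
  have hT1 : (A ^ 1).trace = A.trace := by rw [pow_one]
  have hdet : A.det = 1 ∨ A.det = -1 := by
    have hd : A.det ^ m = 1 := by rw [← Matrix.det_pow, h1, Matrix.det_one]
    exact Int.isUnit_iff.mp (IsUnit.of_pow_eq_one hd hm.ne')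
  have hbig : ¬ (3 ≤ A.trace) := by
    intro h3
    refine seq2 (fun k => (A ^ k).trace) A.trace A.det h3 ?_ hT0 hT1
      (fun k => trace_rec A k) m hm ?_
    · rcases hdet with h | h <;> simp [h]
    · show trace (A ^ m) = trace (A ^ 0)
      rw [h1, pow_zero]
  have hneg : A.det = -1 → ¬ (1 ≤ A.trace) := by
    intro hd h3
    refine seq1 (fun k => (A ^ k).trace) A.trace h3 hT0 hT1
      (fun k => by have := trace_rec A k; rw [hd] at this; linarith) m hm ?_
    show trace (A ^ (m+1)) = trace (A ^ 1)
    rw [pow_succ, h1, one_mul, pow_one]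
  have hch := cayley A
  rcases hdet with hd | hd
  · have ht : A.trace = 0 ∨ A.trace = 1 ∨ A.trace = 2 := by
      by_cases h : A.trace = 0
      · exact Or.inl h
      · right; omega
    rcases ht with h | h | h
    · right; left
      rw [hch, h, hd]; simp
    · have h2 : A ^ 2 = A - 1 := by rw [hch, h, hd]; simp
      right; right; right
      calc A ^ 3 = A ^ 2 * A := by rw [pow_succ]
        _ = (A - 1) * A := by rw [h2]
        _ = A ^ 2 - A := by rw [sub_mul, one_mul, sq]
        _ = -1 := by rw [h2]; abel
    · have h2 : A ^ 2 = 2 • A - 1 := by rw [hch, h, hd]; simp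
      have hB : (A - 1) * (A - 1) = 0 := by
        calc (A - 1) * (A - 1) = A ^ 2 - A - A + 1 := by noncomm_ring
        _ = 0 := by rw [h2, two_smul]; abel
      have hA : A = 1 + (A - 1) := by abel
      have hz : (m : ℤ) • (A - 1) = 0 := by
        have hn := nilsq (A - 1) hB m
        rw [← hA, h1] at hn
        rwa [left_eq_add] at hn
      have hB0 : A - 1 = 0 := by
        have hm' : (m : ℤ) ≠ 0 := by exact_mod_cast hm.ne'
        rcases smul_eq_zero.mp hz with h' | h'
        · exact absurd h' hm'
        · exact h'
      left
      have hA1 : A = 1 := by rwa [sub_eq_zero] at hB0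
      rw [hA1, one_pow]
  · have ht : A.trace = 0 := by
      by_contra h
      exact hneg hd (by omega)
    left
    rw [hch, ht, hd]; simp

lemma torsion_mat (A : M2) (m : ℕ) (hm : 0 < m) (h1 : A ^ m = 1) :
    A ^ 2 = 1 ∨ A ^ 2 = -1 ∨ A ^ 3 = 1 ∨ A ^ 3 = -1 := by
  by_cases htr : 0 ≤ A.trace
  · exact torsion_mat_pos A m hm h1 htr
  · have hB : (-A) ^ (2*m) = 1 := by
      rw [Even.neg_pow (even_two_mul m), mul_comm, pow_mul, h1, one_pow]
    have htr' : 0 ≤ (-A).trace := by rw [Matrix.trace_neg]; omega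
    have hsq : (-A) ^ 2 = A ^ 2 := neg_sq A
    have hcub : (-A) ^ 3 = -(A ^ 3) := Odd.neg_pow ⟨1, by ring⟩ A
    rcases torsion_mat_pos (-A) (2*m) (by omega) hB htr' with h | h | h | h
    · left; rwa [hsq] at h
    · right; left; rwa [hsq] at h
    · right; right; right
      rw [hcub] at h
      rwa [neg_eq_iff_eq_neg] at h
    · right; right; left
      rw [hcub] at h
      rw [neg_eq_iff_eq_neg] at h
      rwa [neg_neg] at h

/-! ### The center of GL(2,ℤ) is {±1} -/

def Umat : GL2Z := ⟨!![1,1;0,1], !![1,-1;0,1], by decide, by decide⟩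
def Lmat : GL2Z := ⟨!![1,0;1,1], !![1,0;-1,1], by decide, by decide⟩

lemma center_eq (c : GL2Z) (hc : c ∈ Subgroup.center GL2Z) : c = 1 ∨ c = -1 := by
  have hU := (Subgroup.mem_center_iff.mp hc Umat)
  have hL := (Subgroup.mem_center_iff.mp hc Lmat)
  have hU' : (Umat.val) * c.val = c.val * Umat.val := congrArg Units.val hU
  have hL' : (Lmat.val) * c.val = c.val * Lmat.val := congrArg Units.val hL
  have e1 := congrFun (congrFun hU' 0) 0
  have e2 := congrFun (congrFun hU' 0) 1
  have e3 := congrFun (congrFun hL' 0) 0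
  simp [Matrix.mul_apply, Fin.sum_univ_two, Umat, Lmat] at e1 e2 e3
  have h10 : c.val 1 0 = 0 := by omega
  have h01 : c.val 0 1 = 0 := by omega
  have h11 : c.val 1 1 = c.val 0 0 := by omega
  have hdet : IsUnit (c.val 0 0) := by
    have h := congrArg Matrix.det c.inv_val
    rw [Matrix.det_mul, Matrix.det_one] at h
    rw [Matrix.det_fin_two ((c : Matrix (Fin 2) (Fin 2) ℤ))] at h
    rw [h10, h01, h11] at h
    exact IsUnit.of_mul_eq_one (c.val 0 0 * c.inv.det) (by linear_combination h)
  rcases Int.isUnit_iff.mp hdet with h | h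
  · left; ext i j; fin_cases i <;> fin_cases j <;> simp [h10, h01, h11, h]
  · right; ext i j; fin_cases i <;> fin_cases j <;> simp [h10, h01, h11, h]

lemma neg_one_mem_center : (-1 : GL2Z) ∈ Subgroup.center GL2Z := by
  rw [Subgroup.mem_center_iff]
  intro g
  ext
  simp

/-! ### Torsion in PGL(2,ℤ) has order dividing 2 or 3 -/

lemma pgl_torsion (x : PGL2Z) (hx : IsOfFinOrder x) : x ^ 2 = 1 ∨ x ^ 3 = 1 := by
  obtain ⟨g, rfl⟩ := QuotientGroup.mk_surjective x
  obtain ⟨n, hn, hgn⟩ := isOfFinOrder_iff_pow_eq_one.mp hx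
  have hgn' : (g ^ n : GL2Z) ∈ Subgroup.center GL2Z := by
    rw [← QuotientGroup.eq_one_iff]
    simpa using hgn
  have h2n : g ^ (2*n) = 1 := by
    rcases center_eq _ hgn' with h | h
    · rw [mul_comm, pow_mul, h, one_pow]
    · rw [mul_comm, pow_mul, h]
      simp
  have hval : (g.val) ^ (2*n) = 1 := by
    rw [← Units.val_pow_eq_pow_val, h2n, Units.val_one]
  rcases torsion_mat g.val (2*n) (by omega) hval with h | h | h | h
  · left
    have hg : g ^ 2 = 1 := by ext; rw [Units.val_pow_eq_pow_val, h]; rfl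
    rw [← QuotientGroup.mk_pow, hg]; rfl
  · left
    have hg : g ^ 2 = -1 := by ext; rw [Units.val_pow_eq_pow_val, h]; simp
    rw [← QuotientGroup.mk_pow, hg, QuotientGroup.eq_one_iff]
    exact neg_one_mem_center
  · right
    have hg : g ^ 3 = 1 := by ext; rw [Units.val_pow_eq_pow_val, h]; rfl
    rw [← QuotientGroup.mk_pow, hg]; rfl
  · right
    have hg : g ^ 3 = -1 := by ext; rw [Units.val_pow_eq_pow_val, h]; simp
    rw [← QuotientGroup.mk_pow, hg, QuotientGroup.eq_one_iff]
    exact neg_one_mem_center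

/-! ### The character χ : PGL(2,ℤ) → ℤˣ × ℤˣ -/

def sgn : Matrix.GeneralLinearGroup (Fin 2) (ZMod 2) →* ℤˣ :=
  MonoidHom.mk' (fun g => if (g : Matrix (Fin 2) (Fin 2) (ZMod 2)).trace = 1 ∨ g = 1 then 1 else -1)
    (by decide)

def red : GL2Z →* Matrix.GeneralLinearGroup (Fin 2) (ZMod 2) :=
  Units.map ((Int.castRingHom (ZMod 2)).mapMatrix.toMonoidHom)

def chi0 : GL2Z →* ℤˣ × ℤˣ :=
  (Matrix.GeneralLinearGroup.det).prod (sgn.comp red)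

lemma chi0_neg_one : chi0 (-1) = 1 := by
  have h1 : Matrix.GeneralLinearGroup.det (-1 : GL2Z) = 1 := by
    ext
    show ((-1 : GL2Z) : M2).det = 1
    rw [Units.val_neg, Units.val_one]
    simp [Matrix.det_neg]
  have h2 : red (-1) = 1 := by
    ext i j
    show ((Int.castRingHom (ZMod 2)).mapMatrix ((-1 : GL2Z) : M2)) i j = _
    rw [Units.val_neg, Units.val_one, map_neg, _root_.map_one]
    fin_cases i <;> fin_cases j <;> decide
  show (Matrix.GeneralLinearGroup.det (-1 : GL2Z), sgn (red (-1))) = 1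
  rw [h1, h2, _root_.map_one]
  rfl

lemma center_le_ker : Subgroup.center GL2Z ≤ chi0.ker := by
  intro c hc
  rcases center_eq c hc with h | h
  · rw [MonoidHom.mem_ker, h, _root_.map_one]
  · rw [MonoidHom.mem_ker, h, chi0_neg_one]

def chi : PGL2Z →* ℤˣ × ℤˣ :=
  QuotientGroup.lift _ chi0 center_le_ker

def bU : GL2Z := ⟨!![-1,0;0,1], !![-1,0;0,1], by decide, by decide⟩
def SU : GL2Z := ⟨!![0,-1;1,0], !![0,1;-1,0], by decide, by decide⟩

lemma chi_bU : chi (QuotientGroup.mk bU) = (-1, 1) := by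
  show chi0 bU = (-1, 1)
  have h1 : Matrix.GeneralLinearGroup.det bU = -1 := by
    ext
    show (bU.val).det = ((-1 : ℤˣ) : ℤ)
    rw [Matrix.det_fin_two]
    simp [bU]
  have h2 : red bU = 1 := by
    ext i j
    show ((Int.castRingHom (ZMod 2)).mapMatrix (bU : M2)) i j = _
    fin_cases i <;> fin_cases j <;> decide
  show (Matrix.GeneralLinearGroup.det bU, sgn (red bU)) = (-1, 1)
  rw [h1, h2, _root_.map_one]

lemma chi_SU : chi (QuotientGroup.mk SU) = (1, -1) := by
  show chi0 SU = (1, -1)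
  have h1 : Matrix.GeneralLinearGroup.det SU = 1 := by
    ext
    show (SU.val).det = ((1 : ℤˣ) : ℤ)
    rw [Matrix.det_fin_two]
    simp [SU]
  have h2 : red SU = ⟨!![0,1;1,0], !![0,1;1,0], by decide, by decide⟩ := by
    ext i j
    show ((Int.castRingHom (ZMod 2)).mapMatrix (SU : M2)) i j = _
    fin_cases i <;> fin_cases j <;> decide
  have h3 : sgn (⟨!![0,1;1,0], !![0,1;1,0], by decide, by decide⟩ :
      Matrix.GeneralLinearGroup (Fin 2) (ZMod 2)) = -1 := by decide
  show (Matrix.GeneralLinearGroup.det SU, sgn (red SU)) = (1, -1)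
  rw [h1, h2, h3]

/-! ### Elements of ℤˣ × ℤˣ -/

lemma zpow_pair (v : ℤˣ × ℤˣ) (k : ℤ) : v ^ k = 1 ∨ v ^ k = v := by
  have h2 : v ^ (2:ℤ) = 1 := by
    have : v ^ (2:ℕ) = 1 := by revert v; decide
    rw [← zpow_natCast] at this
    exact_mod_cast this
  rcases Int.even_or_odd k with ⟨q, hq⟩ | ⟨q, hq⟩
  · left
    rw [hq, show q + q = 2 * q by ring, _root_.zpow_mul, h2, _root_.one_zpow]
  · right
    rw [hq, _root_.zpow_add, _root_.zpow_mul, h2, _root_.one_zpow, one_mul, _root_.zpow_one]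

end PGL2ZAux

open PGL2ZAux

theorem PGL2Z_not_generated_by_two_torsion_elements :
    ¬ ∃ x y : PGL2Z, IsOfFinOrder x ∧ IsOfFinOrder y ∧
      Subgroup.closure ({x, y} : Set PGL2Z) = ⊤ := by
  rintro ⟨x, y, hx, hy, hgen⟩
  -- key sub-lemma: the mixed / cube case
  have cube_case : ∀ u v : PGL2Z, u ^ 3 = 1 → Subgroup.closure ({u, v} : Set PGL2Z) = ⊤ → False := by
    intro u v hu3 hgen'
    have hchiu : chi u = 1 := by
      have h2 : (chi u) ^ 2 = 1 := by
        have : ∀ w : ℤˣ × ℤˣ, w ^ 2 = 1 := by decide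
        exact this _
      have h3 : (chi u) ^ 3 = 1 := by rw [← map_pow, hu3, _root_.map_one]
      calc chi u = (chi u) ^ 3 * ((chi u) ^ 2)⁻¹ := by group
        _ = 1 := by rw [h2, h3]; simp
    have hmap : (⊤ : Subgroup PGL2Z).map chi ≤ Subgroup.zpowers (chi v) := by
      rw [← hgen', MonoidHom.map_closure]
      refine Subgroup.closure_le _ |>.mpr ?_
      rintro z hz
      simp only [Set.image_pair] at hz
      rcases hz with rfl | rfl
      · rw [hchiu]; exact Subgroup.one_mem _
      · exact Subgroup.mem_zpowers _
    have hb : chi (QuotientGroup.mk bU) ∈ Subgroup.zpowers (chi v) :=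
      hmap ⟨_, Subgroup.mem_top _, rfl⟩
    have hs : chi (QuotientGroup.mk SU) ∈ Subgroup.zpowers (chi v) :=
      hmap ⟨_, Subgroup.mem_top _, rfl⟩
    rw [chi_bU] at hb
    rw [chi_SU] at hs
    obtain ⟨k, hk0⟩ := hb
    obtain ⟨l, hl0⟩ := hs
    have hk : chi v ^ k = (-1, 1) := hk0
    have hl : chi v ^ l = (1, -1) := hl0
    rcases zpow_pair (chi v) k with h | h <;> rcases zpow_pair (chi v) l with h' | h' <;>
      rw [h] at hk <;> rw [h'] at hl <;>
      first
        | (exact absurd hk (by decide))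
        | (exact absurd hl (by decide))
        | (exact absurd (hk.symm.trans hl) (by decide))
  -- case analysis on orders
  rcases pgl_torsion x hx with hx2 | hx3
  · rcases pgl_torsion y hy with hy2 | hy3
    · -- dihedral case
      set c := x * y with hc
      have hxi : x⁻¹ = x := by
        rw [← mul_one x⁻¹, ← hx2, sq, ← mul_assoc, inv_mul_cancel, one_mul]
      have hyi : y⁻¹ = y := by
        rw [← mul_one y⁻¹, ← hy2, sq, ← mul_assoc, inv_mul_cancel, one_mul]
      have hsc : SemiconjBy x c c⁻¹ := by
        show x * c = c⁻¹ * x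
        rw [hc, _root_.mul_inv_rev, hxi, hyi, ← mul_assoc, ← sq, hx2, one_mul, mul_assoc,
          ← sq, hx2, mul_one]
      have hconj : ∀ k : ℤ, x * c ^ k = c ^ (-k) * x := by
        intro k
        have h' := (hsc.zpow_right k).eq
        rwa [_root_.inv_zpow, ← _root_.zpow_neg] at h'
      have hcx : ∀ k : ℤ, c ^ k * x = x * c ^ (-k) := by
        intro k
        have h' := hconj (-k)
        rw [neg_neg] at h'
        exact h'.symm
      set K : Subgroup PGL2Z :=
        { carrier := {g | ∃ k : ℤ, g = c ^ k ∨ g = x * c ^ k}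
          one_mem' := ⟨0, Or.inl (by simp)⟩
          mul_mem' := by
            rintro g h ⟨k, hg | hg⟩ ⟨l, hh | hh⟩
            · exact ⟨k + l, Or.inl (by rw [hg, hh, _root_.zpow_add])⟩
            · refine ⟨-k + l, Or.inr ?_⟩
              rw [hg, hh, ← mul_assoc, hcx k, mul_assoc, ← _root_.zpow_add]
            · exact ⟨k + l, Or.inr (by rw [hg, hh, mul_assoc, ← _root_.zpow_add])⟩
            · refine ⟨-k + l, Or.inl ?_⟩
              rw [hg, hh, ← mul_assoc, mul_assoc x _ x, hcx k, ← mul_assoc,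
                ← sq, hx2, one_mul, ← _root_.zpow_add]
          inv_mem' := by
            rintro g ⟨k, hg | hg⟩
            · exact ⟨-k, Or.inl (by rw [hg, _root_.zpow_neg])⟩
            · refine ⟨k, Or.inr ?_⟩
              rw [hg, _root_.mul_inv_rev, hxi, ← _root_.zpow_neg, ← hconj k]
          } with hK
      have hxK : x ∈ K := ⟨0, Or.inr (by simp)⟩
      have hyK : y ∈ K := ⟨1, Or.inr (by
        rw [_root_.zpow_one, hc, ← mul_assoc, ← sq, hx2, one_mul])⟩
      have htop : ∀ g : PGL2Z, g ∈ K := by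
        intro g
        have : Subgroup.closure ({x, y} : Set PGL2Z) ≤ K := by
          refine (Subgroup.closure_le _).mpr ?_
          rintro z (rfl | rfl)
          · exact hxK
          · exact hyK
        rw [hgen] at this
        exact this (Subgroup.mem_top g)
      have hsq : ∀ g : PGL2Z, ∃ j : ℤ, g ^ 2 = c ^ j := by
        intro g
        rcases htop g with ⟨k, hg | hg⟩
        · exact ⟨k + k, by rw [hg, sq, ← _root_.zpow_add]⟩
        · refine ⟨0, ?_⟩
          rw [hg, sq, ← mul_assoc, mul_assoc x _ x, hcx k, ← mul_assoc,
            ← sq, hx2, one_mul, ← _root_.zpow_add, neg_add_cancel, _root_.zpow_zero]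
      obtain ⟨j1, hj1⟩ := hsq (QuotientGroup.mk Umat)
      obtain ⟨j2, hj2⟩ := hsq (QuotientGroup.mk Lmat)
      have hcomm : (QuotientGroup.mk Umat : PGL2Z) ^ 2 * (QuotientGroup.mk Lmat : PGL2Z) ^ 2
          = (QuotientGroup.mk Lmat : PGL2Z) ^ 2 * (QuotientGroup.mk Umat : PGL2Z) ^ 2 := by
        rw [hj1, hj2, ← _root_.zpow_add, ← _root_.zpow_add, add_comm]
      have hcomm' : (QuotientGroup.mk (Umat ^ 2 * Lmat ^ 2) : PGL2Z)
          = QuotientGroup.mk (Lmat ^ 2 * Umat ^ 2) := by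
        simpa using hcomm
      have hmem := (QuotientGroup.eq).mp hcomm'
      rcases center_eq _ hmem with he | he <;> revert he <;> decide
    · exact cube_case y x hy3 (by rwa [Set.pair_comm] at hgen)
  · exact cube_case x y hx3 hgen
end

section
/- GL(2,ℤ) cannot be generated by two elements of finite order. -/
open Matrix

namespace GL2TT

abbrev GL2 := Matrix.GeneralLinearGroup (Fin 2) ℤ

def detU : GL2 →* ℤˣ := Units.map Matrix.detMonoidHom

lemma detU_val (A : GL2) : (detU A : ℤ) = (A : Matrix (Fin 2) (Fin 2) ℤ).det := rfl

lemma cayley (M : Matrix (Fin 2) (Fin 2) ℤ) :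
    M * M = (M 0 0 + M 1 1) • M - (M 0 0 * M 1 1 - M 0 1 * M 1 0) • (1 : Matrix (Fin 2) (Fin 2) ℤ) := by
  ext i j
  fin_cases i <;> fin_cases j <;>
    simp only [Matrix.mul_apply, Fin.sum_univ_two, Matrix.sub_apply, Matrix.smul_apply,
      Matrix.one_apply, smul_eq_mul] <;> norm_num <;> ring

def seq (t d : ℤ) : ℕ → ℤ
  | 0 => 0
  | 1 => 1
  | (n+2) => t * seq t d (n+1) - d * seq t d n

lemma pow_eq (M : Matrix (Fin 2) (Fin 2) ℤ) (t d : ℤ)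
    (h : M * M = t • M - d • (1 : Matrix (Fin 2) (Fin 2) ℤ)) :
    ∀ n : ℕ, M ^ (n+1) = seq t d (n+1) • M - (d * seq t d n) • (1 : Matrix (Fin 2) (Fin 2) ℤ) := by
  intro n
  induction n with
  | zero => simp [seq]
  | succ n ih =>
      rw [pow_succ, ih, sub_mul, smul_mul_assoc, h, smul_mul_assoc, one_mul]
      show _ = seq t d (n+2) • M - (d * seq t d (n+1)) • (1:Matrix (Fin 2) (Fin 2) ℤ)
      rw [show seq t d (n+2) = t * seq t d (n+1) - d * seq t d n from rfl]
      module

lemma growth1 (t : ℤ) (ht : 2 ≤ t) :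
    ∀ n : ℕ, 0 ≤ seq t 1 n ∧ seq t 1 n + 1 ≤ seq t 1 (n+1) := by
  intro n
  induction n with
  | zero => simp [seq]
  | succ n ih =>
      obtain ⟨h0, h1⟩ := ih
      constructor
      · linarith
      · rw [show seq t 1 (n+2) = t * seq t 1 (n+1) - 1 * seq t 1 n from rfl]
        nlinarith [mul_le_mul_of_nonneg_right ht (by linarith : (0:ℤ) ≤ seq t 1 (n+1))]

lemma growth2 (t : ℤ) (ht : 1 ≤ t) :
    ∀ n : ℕ, 0 ≤ seq t (-1) n ∧ 1 ≤ seq t (-1) (n+1) := by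
  intro n
  induction n with
  | zero => simp [seq]
  | succ n ih =>
      obtain ⟨h0, h1⟩ := ih
      refine ⟨by linarith, ?_⟩
      rw [show seq t (-1) (n+2) = t * seq t (-1) (n+1) - (-1) * seq t (-1) n from rfl]
      nlinarith [mul_le_mul_of_nonneg_right ht (by linarith : (0:ℤ) ≤ seq t (-1) (n+1))]

lemma classify_nonneg (A : GL2) (h : IsOfFinOrder A)
    (ht : 0 ≤ (A : Matrix (Fin 2) (Fin 2) ℤ) 0 0 + (A : Matrix (Fin 2) (Fin 2) ℤ) 1 1) :
    ((A^3 = 1 ∨ A^3 = -1) ∧ detU A = 1) ∨ (A^2 = -1 ∧ detU A = 1) ∨ (A^2 = 1 ∧ detU A = -1) := by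
  have hM : ((A:GL2) : Matrix (Fin 2) (Fin 2) ℤ) = (A : Matrix (Fin 2) (Fin 2) ℤ) := rfl
  generalize hMdef : ((A:GL2) : Matrix (Fin 2) (Fin 2) ℤ) = M at *
  have hCH := cayley M
  have hdet : M.det = M 0 0 * M 1 1 - M 0 1 * M 1 0 := Matrix.det_fin_two M
  have hdunit : M 0 0 * M 1 1 - M 0 1 * M 1 0 = 1 ∨ M 0 0 * M 1 1 - M 0 1 * M 1 0 = -1 := by
    have : IsUnit M.det := by
      rw [← hMdef]; exact (Matrix.isUnit_iff_isUnit_det _).mp A.isUnit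
    rw [hdet] at this; exact Int.isUnit_iff.mp this
  have hdetval : (detU A : ℤ) = M 0 0 * M 1 1 - M 0 1 * M 1 0 := by
    rw [detU_val, hMdef, hdet]
  obtain ⟨N, hNpos, hAN⟩ := isOfFinOrder_iff_pow_eq_one.mp h
  obtain ⟨m, rfl⟩ : ∃ m, N = m + 1 := ⟨N - 1, by omega⟩
  have hMN : M ^ (m+1) = 1 := by
    rw [← hMdef, ← Units.val_pow_eq_pow_val, hAN, Units.val_one]
  rcases hdunit with hd | hd
  · -- det = 1
    have hdetU : detU A = 1 := Units.ext (by rw [hdetval, hd]; rfl)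
    rcases (show M 0 0 + M 1 1 = 0 ∨ M 0 0 + M 1 1 = 1 ∨ 2 ≤ M 0 0 + M 1 1 by omega) with h0 | h1 | h2
    · -- A^2 = -1
      refine Or.inr (Or.inl ⟨Units.ext ?_, hdetU⟩)
      show ((A^2 : GL2) : Matrix (Fin 2) (Fin 2) ℤ) = ((-1 : GL2) : Matrix (Fin 2) (Fin 2) ℤ)
      rw [Units.val_pow_eq_pow_val, hMdef, pow_two, hCH, h0, hd, Units.val_neg, Units.val_one]
      simp
    · -- A^3 = -1
      refine Or.inl ⟨Or.inr (Units.ext ?_), hdetU⟩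
      show ((A^3 : GL2) : Matrix (Fin 2) (Fin 2) ℤ) = ((-1 : GL2) : Matrix (Fin 2) (Fin 2) ℤ)
      rw [Units.val_pow_eq_pow_val, hMdef, pow_succ, pow_two, hCH, h1, hd, Units.val_neg,
        Units.val_one]
      rw [one_smul, one_smul, sub_mul, one_mul, hCH, h1, hd, one_smul, one_smul]
      abel
    · -- trace ≥ 2 : A = 1
      have key := pow_eq M (M 0 0 + M 1 1) 1 (by rw [← hd]; exact hCH) m
      rw [hMN] at key
      have hs0 := (growth1 _ h2 m).1
      have hs1 := (growth1 _ h2 m).2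
      have hsne : seq (M 0 0 + M 1 1) 1 (m+1) ≠ 0 := by omega
      have e00 := congrArg (fun X : Matrix (Fin 2) (Fin 2) ℤ => X 0 0) key
      have e01 := congrArg (fun X : Matrix (Fin 2) (Fin 2) ℤ => X 0 1) key
      have e10 := congrArg (fun X : Matrix (Fin 2) (Fin 2) ℤ => X 1 0) key
      have e11 := congrArg (fun X : Matrix (Fin 2) (Fin 2) ℤ => X 1 1) key
      simp only [Matrix.sub_apply, Matrix.smul_apply, smul_eq_mul, Matrix.one_apply_eq,
        Matrix.one_apply_ne (by decide : (0 : Fin 2) ≠ 1),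
        Matrix.one_apply_ne (by decide : (1 : Fin 2) ≠ 0)] at e00 e01 e10 e11
      have h01 : M 0 1 = 0 := by
        rcases mul_eq_zero.mp (by linarith : seq (M 0 0 + M 1 1) 1 (m+1) * M 0 1 = 0) with h | h
        · exact absurd h hsne
        · exact h
      have h10 : M 1 0 = 0 := by
        rcases mul_eq_zero.mp (by linarith : seq (M 0 0 + M 1 1) 1 (m+1) * M 1 0 = 0) with h | h
        · exact absurd h hsne
        · exact h
      have heq : M 0 0 = M 1 1 := by
        have : seq (M 0 0 + M 1 1) 1 (m+1) * M 0 0 = seq (M 0 0 + M 1 1) 1 (m+1) * M 1 1 := by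
          omega
        exact mul_left_cancel₀ hsne this
      have hsq : M 0 0 * M 0 0 = 1 := by
        rw [heq, h01] at hd; rw [heq]; simpa using hd
      have h1 : M 0 0 = 1 ∨ M 0 0 = -1 := Int.isUnit_iff.mp (IsUnit.of_mul_eq_one _ hsq)
      have h00 : M 0 0 = 1 := by omega
      refine Or.inl ⟨Or.inl ?_, hdetU⟩
      have : A = 1 := by
        apply Units.ext
        show ((A:GL2) : Matrix (Fin 2) (Fin 2) ℤ) = 1
        rw [hMdef]
        ext i j
        fin_cases i <;> fin_cases j <;> simp [Matrix.one_apply, h01, h10, h00, heq ▸ h00]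
      rw [this, one_pow]
  · -- det = -1
    have hdetU : detU A = -1 := Units.ext (by rw [hdetval, hd]; rfl)
    rcases (show M 0 0 + M 1 1 = 0 ∨ 1 ≤ M 0 0 + M 1 1 by omega) with h0 | h1
    · refine Or.inr (Or.inr ⟨Units.ext ?_, hdetU⟩)
      show ((A^2 : GL2) : Matrix (Fin 2) (Fin 2) ℤ) = ((1 : GL2) : Matrix (Fin 2) (Fin 2) ℤ)
      rw [Units.val_pow_eq_pow_val, hMdef, pow_two, hCH, h0, hd, Units.val_one]
      simp
    · exfalso
      have key := pow_eq M (M 0 0 + M 1 1) (-1) (by rw [← hd]; exact hCH) m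
      rw [hMN] at key
      have hs0 := (growth2 _ h1 m).1
      have hs1 := (growth2 _ h1 m).2
      have hsne : seq (M 0 0 + M 1 1) (-1) (m+1) ≠ 0 := by omega
      have e00 := congrArg (fun X : Matrix (Fin 2) (Fin 2) ℤ => X 0 0) key
      have e01 := congrArg (fun X : Matrix (Fin 2) (Fin 2) ℤ => X 0 1) key
      have e10 := congrArg (fun X : Matrix (Fin 2) (Fin 2) ℤ => X 1 0) key
      have e11 := congrArg (fun X : Matrix (Fin 2) (Fin 2) ℤ => X 1 1) key
      simp only [Matrix.sub_apply, Matrix.smul_apply, smul_eq_mul, Matrix.one_apply_eq,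
        Matrix.one_apply_ne (by decide : (0 : Fin 2) ≠ 1),
        Matrix.one_apply_ne (by decide : (1 : Fin 2) ≠ 0)] at e00 e01 e10 e11
      have h01 : M 0 1 = 0 := by
        rcases mul_eq_zero.mp (by linarith : seq (M 0 0 + M 1 1) (-1) (m+1) * M 0 1 = 0) with h | h
        · exact absurd h hsne
        · exact h
      have h10 : M 1 0 = 0 := by
        rcases mul_eq_zero.mp (by linarith : seq (M 0 0 + M 1 1) (-1) (m+1) * M 1 0 = 0) with h | h
        · exact absurd h hsne
        · exact h
      have heq : M 0 0 = M 1 1 := by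
        have : seq (M 0 0 + M 1 1) (-1) (m+1) * M 0 0
            = seq (M 0 0 + M 1 1) (-1) (m+1) * M 1 1 := by omega
        exact mul_left_cancel₀ hsne this
      rw [heq, h01, h10] at hd
      nlinarith [sq_nonneg (M 1 1)]


lemma classify (A : GL2) (h : IsOfFinOrder A) :
    ((A^3 = 1 ∨ A^3 = -1) ∧ detU A = 1) ∨ (A^2 = -1 ∧ detU A = 1) ∨ (A^2 = 1 ∧ detU A = -1) := by
  rcases le_or_gt 0 ((A : Matrix (Fin 2) (Fin 2) ℤ) 0 0 + (A : Matrix (Fin 2) (Fin 2) ℤ) 1 1)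
    with hle | hlt
  · exact classify_nonneg A h hle
  · have hfin : IsOfFinOrder (-A) := by
      obtain ⟨N, hNpos, hAN⟩ := isOfFinOrder_iff_pow_eq_one.mp h
      refine isOfFinOrder_iff_pow_eq_one.mpr ⟨2*N, by omega, ?_⟩
      rw [pow_mul, neg_sq, ← pow_mul, mul_comm 2 N, pow_mul, hAN, one_pow]
    have htr : 0 ≤ ((-A : GL2) : Matrix (Fin 2) (Fin 2) ℤ) 0 0
        + ((-A : GL2) : Matrix (Fin 2) (Fin 2) ℤ) 1 1 := by
      simp only [Units.val_neg, Matrix.neg_apply]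
      linarith
    have hdetneg : detU (-A) = detU A := by
      apply Units.ext
      show ((-A : GL2) : Matrix (Fin 2) (Fin 2) ℤ).det = ((A : GL2) : Matrix (Fin 2) (Fin 2) ℤ).det
      rw [Units.val_neg, Matrix.det_neg]
      norm_num
    have hodd : (-A)^3 = -(A^3) := Odd.neg_pow ⟨1, by norm_num⟩ A
    rcases classify_nonneg (-A) hfin htr with ⟨h3, hdet⟩ | ⟨h2, hdet⟩ | ⟨h2, hdet⟩
    · refine Or.inl ⟨?_, by rwa [hdetneg] at hdet⟩
      rcases h3 with h | h
      · right
        rw [hodd] at h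
        exact neg_eq_iff_eq_neg.mp h
      · left
        rw [hodd] at h
        exact neg_inj.mp h
    · refine Or.inr (Or.inl ⟨?_, by rwa [hdetneg] at hdet⟩)
      rwa [neg_sq] at h2
    · refine Or.inr (Or.inr ⟨?_, by rwa [hdetneg] at hdet⟩)
      rwa [neg_sq] at h2

def xU : GL2 := ⟨!![1,1;0,1], !![1,-1;0,1], by decide, by decide⟩
def yU : GL2 := ⟨!![1,0;1,1], !![1,0;-1,1], by decide, by decide⟩
def w2U : GL2 := ⟨!![1,0;0,-1], !![1,0;0,-1], by decide, by decide⟩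

def φ2 : GL2 →* Matrix.GeneralLinearGroup (Fin 2) (ZMod 2) :=
  Units.map (RingHom.mapMatrix (Int.castRingHom (ZMod 2))).toMonoidHom

def permHom : Matrix.GeneralLinearGroup (Fin 2) (ZMod 2) →* Equiv.Perm (Fin 2 → ZMod 2) where
  toFun X :=
    { toFun := fun v => X.val.mulVec v
      invFun := fun v => X.inv.mulVec v
      left_inv := fun v => by
        show X.inv *ᵥ (X.val *ᵥ v) = v
        rw [Matrix.mulVec_mulVec, X.inv_val, Matrix.one_mulVec]
      right_inv := fun v => by
        show X.val *ᵥ (X.inv *ᵥ v) = v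
        rw [Matrix.mulVec_mulVec, X.val_inv, Matrix.one_mulVec] }
  map_one' := by
    ext v
    simp [Matrix.one_mulVec]
  map_mul' := fun a b => by
    ext v
    simp [Matrix.mulVec_mulVec, -Matrix.mulVec_fin_two]

def sgn : Matrix.GeneralLinearGroup (Fin 2) (ZMod 2) →* ℤˣ := Equiv.Perm.sign.comp permHom

lemma sgn_cube (X : Matrix.GeneralLinearGroup (Fin 2) (ZMod 2)) (h : X^3 = 1) : sgn X = 1 := by
  have h3 : (sgn X)^3 = 1 := by rw [← map_pow, h]; exact _root_.map_one sgn
  rcases Int.units_eq_one_or (sgn X) with h1 | h1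
  · exact h1
  · rw [h1] at h3; exact absurd h3 (by decide)

lemma φ2_neg_one : φ2 (-1) = 1 := by
  apply Units.ext
  show (RingHom.mapMatrix (Int.castRingHom (ZMod 2))) (-1 : Matrix (Fin 2) (Fin 2) ℤ) = 1
  decide

lemma sgn_xU : sgn (φ2 xU) = -1 := by decide

lemma detU_xU : detU xU = 1 := Units.ext (by show Matrix.det (xU : Matrix (Fin 2) (Fin 2) ℤ) = 1; decide)

lemma detU_w2U : detU w2U = -1 := Units.ext (by show Matrix.det (w2U : Matrix (Fin 2) (Fin 2) ℤ) = (-1 : ℤˣ); decide)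

lemma mem_pair_closure_self (A B : GL2) : A ∈ Subgroup.closure ({A, B} : Set GL2) :=
  Subgroup.subset_closure (Set.mem_insert _ _)

lemma mem_pair_closure_right (A B : GL2) : B ∈ Subgroup.closure ({A, B} : Set GL2) :=
  Subgroup.subset_closure (Set.mem_insert_of_mem _ rfl)

lemma L1 (A B : GL2) (hA : detU A = 1) (hB : detU B = 1) :
    Subgroup.closure ({A, B} : Set GL2) ≠ ⊤ := by
  intro htop
  have hle : Subgroup.closure ({A, B} : Set GL2) ≤ detU.ker := by
    rw [Subgroup.closure_le]
    rintro x hx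
    simp only [Set.mem_insert_iff, Set.mem_singleton_iff] at hx
    rcases hx with rfl | rfl
    · exact hA
    · exact hB
  have hw : w2U ∈ detU.ker := hle (htop ▸ Subgroup.mem_top w2U)
  rw [MonoidHom.mem_ker, detU_w2U] at hw
  exact absurd hw (by decide)

lemma L2 (A B : GL2) (hA3 : A^3 = 1 ∨ A^3 = -1) (hAd : detU A = 1)
    (hB2 : B^2 = 1) (hBd : detU B = -1) :
    Subgroup.closure ({A, B} : Set GL2) ≠ ⊤ := by
  intro htop
  have hsA : sgn (φ2 A) = 1 := by
    apply sgn_cube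
    rcases hA3 with h | h
    · rw [← map_pow, h]; exact _root_.map_one φ2
    · rw [← map_pow, h]; exact φ2_neg_one
  rcases Int.units_eq_one_or (sgn (φ2 B)) with hsB | hsB
  · have hle : Subgroup.closure ({A, B} : Set GL2) ≤ (sgn.comp φ2).ker := by
      rw [Subgroup.closure_le]
      rintro x hx
      simp only [Set.mem_insert_iff, Set.mem_singleton_iff] at hx
      rcases hx with rfl | rfl
      · exact hsA
      · exact hsB
    have hw : xU ∈ (sgn.comp φ2).ker := hle (htop ▸ Subgroup.mem_top xU)
    rw [MonoidHom.mem_ker] at hw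
    have : sgn (φ2 xU) = 1 := hw
    rw [sgn_xU] at this
    exact absurd this (by decide)
  · have hle : Subgroup.closure ({A, B} : Set GL2) ≤ ((sgn.comp φ2) * detU).ker := by
      rw [Subgroup.closure_le]
      rintro x hx
      simp only [Set.mem_insert_iff, Set.mem_singleton_iff] at hx
      rcases hx with rfl | rfl
      · simp only [SetLike.mem_coe, MonoidHom.mem_ker, MonoidHom.mul_apply, MonoidHom.comp_apply]
        rw [hsA, hAd, mul_one]
      · simp only [SetLike.mem_coe, MonoidHom.mem_ker, MonoidHom.mul_apply, MonoidHom.comp_apply]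
        rw [hsB, hBd]; decide
    have hw : xU ∈ ((sgn.comp φ2) * detU).ker := hle (htop ▸ Subgroup.mem_top xU)
    have : sgn (φ2 xU) * detU xU = 1 := hw
    rw [sgn_xU, detU_xU, mul_one] at this
    exact absurd this (by decide)

lemma L3 (A B : GL2) (hA : A^2 = 1 ∨ A^2 = -1) (hB : B^2 = 1) :
    Subgroup.closure ({A, B} : Set GL2) ≠ ⊤ := by
  intro htop
  have hc : ∀ g : GL2, A^2 * g = g * A^2 := by
    rcases hA with h | h <;> rw [h] <;> intro g
    · rw [one_mul, mul_one]
    · rw [neg_one_mul, mul_neg_one]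
  have hBB : B * B = 1 := by rw [← pow_two]; exact hB
  have hBinv : B⁻¹ = B := inv_eq_of_mul_eq_one_right hBB
  set K := Subgroup.closure ({A*B, A^2} : Set GL2) with hK
  have hrK : A*B ∈ K := Subgroup.subset_closure (Set.mem_insert _ _)
  have hcK : A^2 ∈ K := Subgroup.subset_closure (Set.mem_insert_of_mem _ rfl)
  have hBAeq : B * A = (A*B)⁻¹ * A^2 := by
    rw [eq_inv_mul_iff_mul_eq]
    rw [mul_assoc A B (B*A), ← mul_assoc B B A, hBB, one_mul, ← pow_two]
  have hBA : B * A ∈ K := hBAeq ▸ K.mul_mem (K.inv_mem hrK) hcK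
  have conjA_r : A * (A*B) * A⁻¹ = B * A := by
    rw [mul_inv_eq_iff_eq_mul]
    calc A*(A*B) = (A*A)*B := by rw [mul_assoc]
      _ = A^2 * B := by rw [← pow_two]
      _ = B * A^2 := hc B
      _ = B*(A*A) := by rw [pow_two]
      _ = (B*A)*A := by rw [mul_assoc]
  have conjAi_r : A⁻¹ * (A*B) * A = B * A := by
    rw [inv_mul_cancel_left]
  have conjB_r : B * (A*B) * B⁻¹ = B * A := by
    rw [hBinv, ← mul_assoc B A B, mul_assoc (B*A) B B, hBB, mul_one]
  have ccon : ∀ x : GL2, x*(A^2)*x⁻¹ ∈ K ∧ x⁻¹*(A^2)*x ∈ K := by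
    intro x
    constructor
    · rw [← hc x, mul_inv_cancel_right]; exact hcK
    · rw [← hc x⁻¹, inv_mul_cancel_right]; exact hcK
  have hnorm : ∀ g ∈ Subgroup.closure ({A,B} : Set GL2), ∀ n ∈ K, g*n*g⁻¹ ∈ K ∧ g⁻¹*n*g ∈ K := by
    intro g hg
    refine Subgroup.closure_induction
      (p := fun g _ => ∀ n ∈ K, g*n*g⁻¹ ∈ K ∧ g⁻¹*n*g ∈ K) ?_ ?_ ?_ ?_ hg
    · intro x hx n hn
      simp only [Set.mem_insert_iff, Set.mem_singleton_iff] at hx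
      refine Subgroup.closure_induction
        (p := fun n _ => x*n*x⁻¹ ∈ K ∧ x⁻¹*n*x ∈ K) ?_ ?_ ?_ ?_ hn
      · intro y hy
        simp only [Set.mem_insert_iff, Set.mem_singleton_iff] at hy
        rcases hy with rfl | rfl
        · rcases hx with rfl | rfl
          · exact ⟨conjA_r ▸ hBA, conjAi_r ▸ hBA⟩
          · constructor
            · rw [conjB_r]; exact hBA
            · have e := conjB_r
              rw [hBinv] at e
              rw [hBinv, e]; exact hBA
        · exact ccon x
      · constructor <;> simpa using K.one_mem
      · intro n₁ n₂ _ _ h₁ h₂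
        constructor
        · have e : x*(n₁*n₂)*x⁻¹ = (x*n₁*x⁻¹)*(x*n₂*x⁻¹) := by group
          rw [e]; exact K.mul_mem h₁.1 h₂.1
        · have e : x⁻¹*(n₁*n₂)*x = (x⁻¹*n₁*x)*(x⁻¹*n₂*x) := by group
          rw [e]; exact K.mul_mem h₁.2 h₂.2
      · intro n _ hn'
        constructor
        · have e : x*n⁻¹*x⁻¹ = (x*n*x⁻¹)⁻¹ := by group
          rw [e]; exact K.inv_mem hn'.1
        · have e : x⁻¹*n⁻¹*x = (x⁻¹*n*x)⁻¹ := by group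
          rw [e]; exact K.inv_mem hn'.2
    · intro n hn
      constructor <;> simpa using hn
    · intro g₁ g₂ _ _ h₁ h₂ n hn
      constructor
      · have e : (g₁*g₂)*n*(g₁*g₂)⁻¹ = g₁*(g₂*n*g₂⁻¹)*g₁⁻¹ := by group
        rw [e]; exact (h₁ _ ((h₂ n hn).1)).1
      · have e : (g₁*g₂)⁻¹*n*(g₁*g₂) = g₂⁻¹*(g₁⁻¹*n*g₁)*g₂ := by group
        rw [e]; exact (h₂ _ ((h₁ n hn).2)).2
    · intro g _ hgp n hn
      constructor
      · have e : g⁻¹*n*(g⁻¹)⁻¹ = g⁻¹*n*g := by group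
        rw [e]; exact (hgp n hn).2
      · have e : (g⁻¹)⁻¹*n*g⁻¹ = g*n*g⁻¹ := by group
        rw [e]; exact (hgp n hn).1
  have hKnormal : K.Normal := ⟨fun n hn g => (hnorm g (htop ▸ Subgroup.mem_top g) n hn).1⟩
  haveI := hKnormal
  have hπr : QuotientGroup.mk' K (A*B) = 1 := (QuotientGroup.eq_one_iff _).mpr hrK
  have hπc : QuotientGroup.mk' K (A^2) = 1 := (QuotientGroup.eq_one_iff _).mpr hcK
  have hπB : QuotientGroup.mk' K B = (QuotientGroup.mk' K A)⁻¹ := by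
    apply eq_inv_of_mul_eq_one_right
    rw [← _root_.map_mul]; exact hπr
  have hsq : ∀ g : GL2, g^2 ∈ K := by
    intro g
    have hgmem : QuotientGroup.mk' K g ∈ Subgroup.zpowers (QuotientGroup.mk' K A) := by
      have h1 : g ∈ Subgroup.closure ({A,B} : Set GL2) := htop ▸ Subgroup.mem_top g
      have h2 := Subgroup.mem_map_of_mem (QuotientGroup.mk' K) h1
      rw [MonoidHom.map_closure, Set.image_pair] at h2
      have hle : Subgroup.closure ({QuotientGroup.mk' K A, QuotientGroup.mk' K B} : Set _)
          ≤ Subgroup.zpowers (QuotientGroup.mk' K A) := by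
        rw [Subgroup.closure_le]
        rintro x hx
        simp only [Set.mem_insert_iff, Set.mem_singleton_iff] at hx
        rcases hx with rfl | rfl
        · exact Subgroup.mem_zpowers _
        · rw [hπB]; exact Subgroup.inv_mem _ (Subgroup.mem_zpowers _)
      exact hle h2
    obtain ⟨k, hk⟩ := Subgroup.mem_zpowers_iff.mp hgmem
    have hA2q : (QuotientGroup.mk' K A)^(2:ℕ) = 1 := by rw [← map_pow]; exact hπc
    have : QuotientGroup.mk' K (g^2) = 1 := by
      rw [map_pow, ← hk, ← zpow_natCast ((QuotientGroup.mk' K) A ^ k) 2, ← _root_.zpow_mul,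
        mul_comm k (((2:ℕ)):ℤ), _root_.zpow_mul, zpow_natCast, hA2q, _root_.one_zpow]
    exact (QuotientGroup.eq_one_iff _).mp this
  have hcomm : ∀ x ∈ K, ∀ y ∈ K, Commute x y := by
    intro x hx y hy
    refine Subgroup.closure_induction₂
      (p := fun x y _ _ => Commute x y) ?_ ?_ ?_ ?_ ?_ ?_ ?_ hx hy
    · rintro a b ha hb
      simp only [Set.mem_insert_iff, Set.mem_singleton_iff] at ha hb
      rcases ha with rfl | rfl <;> rcases hb with rfl | rfl
      · exact Commute.refl _
      · exact (hc (A*B)).symm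
      · exact hc (A*B)
      · exact Commute.refl _
    · intro x _; exact Commute.one_left x
    · intro x _; exact Commute.one_right x
    · intro x y z _ _ _ h1 h2; exact Commute.mul_left h1 h2
    · intro y z x _ _ _ h1 h2; exact Commute.mul_right h1 h2
    · intro x y _ _ h; exact Commute.inv_left h
    · intro x y _ _ h; exact Commute.inv_right h
  have hfinal := hcomm _ (hsq xU) _ (hsq yU)
  have : xU^2 * yU^2 = yU^2 * xU^2 := hfinal
  exact absurd this (by decide)

end GL2TT

theorem GL2Z_not_generated_by_two_torsion_elements :
    ¬ ∃ A B : Matrix.GeneralLinearGroup (Fin 2) ℤ, IsOfFinOrder A ∧ IsOfFinOrder B ∧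
      Subgroup.closure ({A, B} : Set (Matrix.GeneralLinearGroup (Fin 2) ℤ)) = ⊤ := by
  rintro ⟨A, B, hA, hB, htop⟩
  have hsymm : Subgroup.closure ({B, A} : Set GL2TT.GL2) = ⊤ := by rwa [Set.pair_comm]
  rcases GL2TT.classify A hA with ⟨hA3, hAd⟩ | ⟨hA2, hAd⟩ | ⟨hA2, hAd⟩ <;>
    rcases GL2TT.classify B hB with ⟨hB3, hBd⟩ | ⟨hB2, hBd⟩ | ⟨hB2, hBd⟩
  · exact GL2TT.L1 A B hAd hBd htop
  · exact GL2TT.L1 A B hAd hBd htop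
  · exact GL2TT.L2 A B hA3 hAd hB2 hBd htop
  · exact GL2TT.L1 A B hAd hBd htop
  · exact GL2TT.L1 A B hAd hBd htop
  · exact GL2TT.L3 A B (Or.inr hA2) hB2 htop
  · exact GL2TT.L2 B A hB3 hBd hA2 hAd hsymm
  · exact GL2TT.L3 B A (Or.inr hB2) hA2 hsymm
  · exact GL2TT.L3 A B (Or.inl hA2) hB2 htop
end

section
/- Every finite-order element of PGL(2,ℤ) is conjugate to one of the eight elements 1, a, a², t, at, a²t, b, bt, where a, b, t are the standard generators with a³ = t² = b² = 1, tat = a², bt = tb. -/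
namespace PGLpres

/-- Relations of the presentation `⟨a, b, t ∣ a³ = t² = b² = 1, at = ta², bt = tb⟩`,
where `a`, `b`, `t` are the generators indexed by `0`, `1`, `2` respectively. -/
def rels : Set (FreeGroup (Fin 3)) :=
  { FreeGroup.of 0 ^ 3, FreeGroup.of 2 ^ 2, FreeGroup.of 1 ^ 2,
    (FreeGroup.of 0 * FreeGroup.of 2) * (FreeGroup.of 2 * FreeGroup.of 0 ^ 2)⁻¹,
    (FreeGroup.of 1 * FreeGroup.of 2) * (FreeGroup.of 2 * FreeGroup.of 1)⁻¹ }

/-- The presented group `P = ⟨a, b, t ∣ a³ = t² = b² = 1, at = ta², bt = tb⟩`,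
isomorphic to `PGL(2, ℤ)`. -/
abbrev P := PresentedGroup rels

def a : P := PresentedGroup.of 0
def b : P := PresentedGroup.of 1
def t : P := PresentedGroup.of 2

lemma rel_one {r : FreeGroup (Fin 3)} (h : r ∈ rels) : PresentedGroup.mk rels r = 1 :=
  (QuotientGroup.eq_one_iff _).2 (Subgroup.subset_normalClosure h)

lemma ha : a ^ 3 = 1 := by
  have := rel_one (r := FreeGroup.of 0 ^ 3) (by simp [rels])
  simpa [a, PresentedGroup.of, map_pow] using this

lemma ht : t ^ 2 = 1 := by
  have := rel_one (r := FreeGroup.of 2 ^ 2) (by simp [rels])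
  simpa [t, PresentedGroup.of, map_pow] using this

lemma hb : b ^ 2 = 1 := by
  have := rel_one (r := FreeGroup.of 1 ^ 2) (by simp [rels])
  simpa [b, PresentedGroup.of, map_pow] using this

lemma hat : a * t = t * a ^ 2 := by
  have := rel_one (r := (FreeGroup.of 0 * FreeGroup.of 2) * (FreeGroup.of 2 * FreeGroup.of 0 ^ 2)⁻¹)
    (by simp [rels])
  rw [map_mul, map_inv, mul_inv_eq_one] at this
  simpa [a, t, PresentedGroup.of, map_mul, map_pow] using this

lemma hbt : b * t = t * b := by
  have := rel_one (r := (FreeGroup.of 1 * FreeGroup.of 2) * (FreeGroup.of 2 * FreeGroup.of 1)⁻¹)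
    (by simp [rels])
  rw [map_mul, map_inv, mul_inv_eq_one] at this
  simpa [b, t, PresentedGroup.of, map_mul] using this
inductive L : Type
  | A1 | A2 | B
  deriving DecidableEq

def kind : L → Bool
  | .B => true
  | _ => false

def Alt (w : List L) : Prop := w.Chain' (fun x y => kind x ≠ kind y)

lemma alt_nil : Alt [] := List.isChain_nil

lemma Alt.tail {l : L} {w : List L} (h : Alt (l :: w)) : Alt w := List.IsChain.tail h

lemma alt_cons {l : L} {w : List L} :
    Alt (l :: w) ↔ (∀ y ∈ w.head?, kind l ≠ kind y) ∧ Alt w := List.isChain_cons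

def tw : L → L
  | .A1 => .A2
  | .A2 => .A1
  | .B => .B

@[simp] lemma kind_tw (l : L) : kind (tw l) = kind l := by cases l <;> rfl

@[simp] lemma tw_tw (l : L) : tw (tw l) = l := by cases l <;> rfl

lemma alt_map_tw {w : List L} (h : Alt w) : Alt (w.map tw) := by
  rw [Alt, List.Chain', List.isChain_map]
  exact h.imp (by intro x y hxy; simpa using hxy)

def rawA : List L → List L
  | .A1 :: u => .A2 :: u
  | .A2 :: u => u
  | w => .A1 :: w

def rawB : List L → List L
  | .B :: u => u
  | w => .B :: w

lemma alt_head_swap {x y : L} {w : List L} (hk : kind x = kind y) (h : Alt (x :: w)) :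
    Alt (y :: w) := by
  rw [alt_cons] at h ⊢
  exact ⟨fun z hz => hk ▸ h.1 z hz, h.2⟩

lemma alt_rawA {w : List L} (h : Alt w) : Alt (rawA w) := by
  match w with
  | .A1 :: u => exact alt_head_swap (x := .A1) rfl h
  | .A2 :: u => exact h.tail
  | [] => exact List.isChain_singleton _
  | .B :: u => exact alt_cons.2 ⟨by simp [kind], h⟩

lemma alt_rawB {w : List L} (h : Alt w) : Alt (rawB w) := by
  match w with
  | .B :: u => exact h.tail
  | [] => exact List.isChain_singleton _
  | .A1 :: u => exact alt_cons.2 ⟨by simp [kind], h⟩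
  | .A2 :: u => exact alt_cons.2 ⟨by simp [kind], h⟩

lemma rawA_cube {w : List L} (h : Alt w) : rawA (rawA (rawA w)) = w := by
  match w with
  | .A1 :: u =>
    show rawA u = _
    match u with
    | [] => rfl
    | .B :: v => rfl
    | .A1 :: v => exact absurd (alt_cons.1 h).1 (by simp [kind])
    | .A2 :: v => exact absurd (alt_cons.1 h).1 (by simp [kind])
  | .A2 :: u =>
    show rawA (rawA u) = _
    match u with
    | [] => rfl
    | .B :: v => rfl
    | .A1 :: v => exact absurd (alt_cons.1 h).1 (by simp [kind])
    | .A2 :: v => exact absurd (alt_cons.1 h).1 (by simp [kind])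
  | [] => rfl
  | .B :: u => rfl

lemma rawB_sq {w : List L} (h : Alt w) : rawB (rawB w) = w := by
  match w with
  | .B :: u =>
    show rawB u = _
    match u with
    | [] => rfl
    | .A1 :: v => rfl
    | .A2 :: v => rfl
    | .B :: v => exact absurd (alt_cons.1 h).1 (by simp [kind])
  | [] => rfl
  | .A1 :: u => rfl
  | .A2 :: u => rfl

lemma rawA_map_tw {w : List L} (h : Alt w) :
    rawA (w.map tw) = (rawA (rawA w)).map tw := by
  match w with
  | .A1 :: u => rfl
  | .A2 :: u =>
    show (.A2 :: u.map tw) = _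
    match u with
    | [] => rfl
    | .B :: v => rfl
    | .A1 :: v => exact absurd (alt_cons.1 h).1 (by simp [kind])
    | .A2 :: v => exact absurd (alt_cons.1 h).1 (by simp [kind])
  | [] => rfl
  | .B :: u => rfl

lemma rawB_map_tw (w : List L) :
    rawB (w.map tw) = (rawB w).map tw := by
  match w with
  | .B :: u => rfl
  | [] => rfl
  | .A1 :: u => rfl
  | .A2 :: u => rfl

/-! ### The normal-form carrier and the action -/

def NF : Type := { p : List L × Bool // Alt p.1 }

def fA : NF → NF := fun x => ⟨(rawA x.1.1, x.1.2), alt_rawA x.2⟩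
def fB : NF → NF := fun x => ⟨(rawB x.1.1, x.1.2), alt_rawB x.2⟩
def fT : NF → NF := fun x => ⟨(x.1.1.map tw, !x.1.2), alt_map_tw x.2⟩

def permA : Equiv.Perm NF where
  toFun := fA
  invFun := fun x => fA (fA x)
  left_inv := fun x => Subtype.ext (by simp [fA, rawA_cube x.2])
  right_inv := fun x => Subtype.ext (by simp [fA, rawA_cube x.2])

def permB : Equiv.Perm NF :=
  Function.Involutive.toPerm fB (fun x => Subtype.ext (by simp [fB, rawB_sq x.2]))

lemma tw_comp : tw ∘ tw = id := funext tw_tw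

def permT : Equiv.Perm NF :=
  Function.Involutive.toPerm fT (fun x => Subtype.ext (by simp [fT, tw_comp]))

def fgen : Fin 3 → Equiv.Perm NF := ![permA, permB, permT]

lemma hrels : ∀ r ∈ rels, FreeGroup.lift fgen r = 1 := by
  intro r hr
  have e0 : fgen 0 = permA := rfl
  have e1 : fgen 1 = permB := rfl
  have e2 : fgen 2 = permT := rfl
  rcases hr with h | h | h | h | h
  · subst h
    rw [map_pow, FreeGroup.lift_apply_of, e0]
    ext x
    show fA (fA (fA x)) = x
    exact Subtype.ext (by simp [fA, rawA_cube x.2])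
  · subst h
    rw [map_pow, FreeGroup.lift_apply_of, e2]
    ext x
    show fT (fT x) = x
    exact Subtype.ext (by simp [fT, tw_comp])
  · subst h
    rw [map_pow, FreeGroup.lift_apply_of, e1]
    ext x
    show fB (fB x) = x
    exact Subtype.ext (by simp [fB, rawB_sq x.2])
  · subst h
    rw [map_mul, map_inv, map_mul, map_mul, map_pow]
    simp only [FreeGroup.lift_apply_of]
    rw [e0, e2, mul_inv_eq_one]
    ext x
    show fA (fT x) = fT (fA (fA x))
    refine Subtype.ext ?_
    show (rawA (x.1.1.map tw), !x.1.2) = ((rawA (rawA x.1.1)).map tw, !x.1.2)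
    rw [rawA_map_tw x.2]
  · rw [Set.mem_singleton_iff] at h
    subst h
    rw [map_mul, map_inv, map_mul, map_mul]
    simp only [FreeGroup.lift_apply_of]
    rw [e1, e2, mul_inv_eq_one]
    ext x
    show fB (fT x) = fT (fB x)
    refine Subtype.ext ?_
    show (rawB (x.1.1.map tw), !x.1.2) = ((rawB x.1.1).map tw, !x.1.2)
    rw [rawB_map_tw]

def phi : P →* Equiv.Perm NF := PresentedGroup.toGroup hrels

lemma phi_a : phi a = permA := PresentedGroup.toGroup.of hrels
lemma phi_b : phi b = permB := PresentedGroup.toGroup.of hrels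
lemma phi_t : phi t = permT := PresentedGroup.toGroup.of hrels


/-! ### Evaluation back to P -/

def letterP : L → P
  | .A1 => a
  | .A2 => a ^ 2
  | .B => b

def evalW (w : List L) : P := (w.map letterP).prod

def tp : Bool → P := fun ε => if ε then t else 1

def ev (w : List L) (ε : Bool) : P := evalW w * tp ε

@[simp] lemma evalW_nil : evalW [] = 1 := rfl
lemma evalW_cons (l : L) (w : List L) : evalW (l :: w) = letterP l * evalW w := by
  simp [evalW]
lemma evalW_append (w u : List L) : evalW (w ++ u) = evalW w * evalW u := by
  simp [evalW]
lemma ev_cons (l : L) (w : List L) (ε : Bool) : ev (l :: w) ε = letterP l * ev w ε := by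
  rw [ev, evalW_cons, ev, mul_assoc]

lemma hta : a ^ 2 * t = t * a := by
  have h4 : a ^ 2 * a ^ 2 = a := by
    rw [← pow_add]
    show a ^ 4 = a
    rw [pow_succ, ha, one_mul]
  calc a ^ 2 * t = a * (a * t) := by rw [pow_two, mul_assoc]
    _ = a * (t * a ^ 2) := by rw [hat]
    _ = (a * t) * a ^ 2 := by rw [mul_assoc]
    _ = (t * a ^ 2) * a ^ 2 := by rw [hat]
    _ = t * (a ^ 2 * a ^ 2) := by rw [mul_assoc]
    _ = t * a := by rw [h4]

lemma htl (l : L) : letterP (tw l) * t = t * letterP l := by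
  cases l
  · exact hta
  · exact hat
  · exact hbt

lemma evalW_map_tw (w : List L) : evalW (w.map tw) * t = t * evalW w := by
  induction w with
  | nil => simp
  | cons l u ih =>
    rw [List.map_cons, evalW_cons, evalW_cons, mul_assoc, ih, ← mul_assoc, htl, mul_assoc]

lemma t_tp (ε : Bool) : t * tp ε = tp (!ε) := by
  cases ε
  · simp [tp]
  · show t * t = tp false
    rw [← pow_two, ht]; rfl

lemma tp_mul (ε δ : Bool) : tp ε * tp δ = tp (xor ε δ) := by
  cases ε
  · simp [tp]
  · show t * tp δ = _
    rw [t_tp]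
    cases δ <;> rfl

def ev2 : NF → P := fun x => ev x.1.1 x.1.2

lemma evT (x : NF) : ev2 (fT x) = t * ev2 x := by
  show ev (x.1.1.map tw) (!x.1.2) = t * ev x.1.1 x.1.2
  rw [ev, ev, ← mul_assoc, ← evalW_map_tw, mul_assoc, t_tp]

lemma evA (x : NF) : ev2 (fA x) = a * ev2 x := by
  obtain ⟨⟨w, ε⟩, h⟩ := x
  show ev (rawA w) ε = a * ev w ε
  match w with
  | .A1 :: u =>
    show ev (.A2 :: u) ε = _
    rw [ev_cons, ev_cons]
    show a ^ 2 * _ = _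
    rw [pow_two, mul_assoc]
    rfl
  | .A2 :: u =>
    show ev u ε = _
    rw [ev_cons]
    show _ = a * (a ^ 2 * _)
    rw [← mul_assoc, ← pow_succ', ha, one_mul]
  | [] => rw [show rawA [] = [.A1] from rfl, ev_cons]; rfl
  | .B :: u => rw [show rawA (.B :: u) = .A1 :: .B :: u from rfl, ev_cons]; rfl

lemma evB (x : NF) : ev2 (fB x) = b * ev2 x := by
  obtain ⟨⟨w, ε⟩, h⟩ := x
  show ev (rawB w) ε = b * ev w ε
  match w with
  | .B :: u =>
    show ev u ε = _
    rw [ev_cons]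
    show _ = b * (b * _)
    rw [← mul_assoc, ← pow_two, hb, one_mul]
  | [] => rw [show rawB [] = [.B] from rfl, ev_cons]; rfl
  | .A1 :: u => rw [show rawB (.A1 :: u) = .B :: .A1 :: u from rfl, ev_cons]; rfl
  | .A2 :: u => rw [show rawB (.A2 :: u) = .B :: .A2 :: u from rfl, ev_cons]; rfl

lemma phi_eval (g : P) : ∀ x : NF, ev2 (phi g x) = g * ev2 x := by
  induction g using PresentedGroup.induction_on with
  | H z =>
    induction z using FreeGroup.induction_on with
    | C1 => intro x; simp
    | of i =>
      intro x
      fin_cases i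
      · show ev2 (phi a x) = a * ev2 x
        rw [phi_a]; exact evA x
      · show ev2 (phi b x) = b * ev2 x
        rw [phi_b]; exact evB x
      · show ev2 (phi t x) = t * ev2 x
        rw [phi_t]; exact evT x
    | inv_of i ih =>
      intro x
      rw [map_inv, map_inv]
      have h1 := ih ((phi ((PresentedGroup.mk rels) (FreeGroup.of i)))⁻¹ x)
      rw [Equiv.Perm.coe_inv, Equiv.apply_symm_apply] at h1
      rw [h1, inv_mul_cancel_left, Equiv.Perm.coe_inv]
    | mul y z ihy ihz =>
      intro x
      rw [map_mul, map_mul, Equiv.Perm.mul_apply, ihy, ihz, mul_assoc]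

def e0 : NF := ⟨([], false), alt_nil⟩

@[simp] lemma ev2_e0 : ev2 e0 = 1 := by
  show (1 : P) * tp false = 1
  simp [tp]

def nf (g : P) : NF := phi g e0

lemma ev2_nf (g : P) : ev2 (nf g) = g := by
  rw [nf, phi_eval, ev2_e0, mul_one]

lemma nf_mul (g h : P) : nf (g * h) = phi g (nf h) := by
  rw [nf, nf, map_mul, Equiv.Perm.mul_apply]

lemma nf_one : (nf 1).1 = ([], false) := by
  rw [nf, map_one]; rfl

lemma rawA_of_headB {u : List L} (hu : ∀ y ∈ u.head?, kind y = true) :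
    rawA u = .A1 :: u := by
  match u with
  | [] => rfl
  | .B :: v => rfl
  | .A1 :: v => exact absurd (hu _ rfl) (by simp [kind])
  | .A2 :: v => exact absurd (hu _ rfl) (by simp [kind])

lemma rawB_of_headA {u : List L} (hu : ∀ y ∈ u.head?, kind y = false) :
    rawB u = .B :: u := by
  match u with
  | [] => rfl
  | .A1 :: v => rfl
  | .A2 :: v => rfl
  | .B :: v => exact absurd (hu _ rfl) (by simp [kind])

lemma nf_ev : ∀ (w : List L) (ε : Bool), Alt w → (nf (ev w ε)).1 = (w, ε) := by
  intro w
  induction w with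
  | nil =>
    intro ε _
    cases ε
    · have : ev [] false = 1 := by simp [ev, tp]
      rw [this, nf_one]
    · have : ev [] true = t := by simp [ev, tp]
      rw [this]
      show ((phi t) e0).1 = _
      rw [phi_t]
      rfl
  | cons l u ih =>
    intro ε h
    rw [ev_cons, nf_mul]
    have hu := ih ε h.tail
    cases l with
    | A1 =>
      have hu' : ∀ y ∈ u.head?, kind y = true := by
        intro y hy
        have := (alt_cons.1 h).1 y hy
        cases y with
        | B => rfl
        | A1 => exact absurd rfl this
        | A2 => exact absurd rfl this
      show ((phi a) _).1 = _
      rw [phi_a]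
      show (rawA (nf (ev u ε)).1.1, (nf (ev u ε)).1.2) = _
      rw [hu]
      show (rawA u, ε) = _
      rw [rawA_of_headB hu']
    | A2 =>
      have hu' : ∀ y ∈ u.head?, kind y = true := by
        intro y hy
        have := (alt_cons.1 h).1 y hy
        cases y with
        | B => rfl
        | A1 => exact absurd rfl this
        | A2 => exact absurd rfl this
      show ((phi (a ^ 2)) _).1 = _
      rw [map_pow, phi_a, pow_two, Equiv.Perm.mul_apply]
      show (rawA (rawA (nf (ev u ε)).1.1), (nf (ev u ε)).1.2) = _
      rw [hu]
      show (rawA (rawA u), ε) = _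
      rw [rawA_of_headB hu']
      rfl
    | B =>
      have hu' : ∀ y ∈ u.head?, kind y = false := by
        intro y hy
        have := (alt_cons.1 h).1 y hy
        cases y with
        | B => exact absurd rfl this
        | A1 => rfl
        | A2 => rfl
      show ((phi b) _).1 = _
      rw [phi_b]
      show (rawB (nf (ev u ε)).1.1, (nf (ev u ε)).1.2) = _
      rw [hu]
      show (rawB u, ε) = _
      rw [rawB_of_headA hu']


/-! ### Concatenation and powers -/

def ctw (ε : Bool) (u : List L) : List L := if ε then u.map tw else u

lemma alt_ctw {u : List L} (ε : Bool) (h : Alt u) : Alt (ctw ε u) := by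
  cases ε
  · exact h
  · exact alt_map_tw h

lemma length_ctw (ε : Bool) (u : List L) : (ctw ε u).length = u.length := by
  cases ε <;> simp [ctw]

lemma head_ctw {ε : Bool} {u : List L} {y : L} (hy : y ∈ (ctw ε u).head?) :
    ∃ y₀ ∈ u.head?, kind y = kind y₀ := by
  cases ε
  · exact ⟨y, hy, rfl⟩
  · match u, hy with
    | z :: v, hy =>
      refine ⟨z, rfl, ?_⟩
      have h1 : tw z = y := by simpa [ctw] using hy
      rw [← h1, kind_tw]

lemma tp_evalW (ε : Bool) (u : List L) : tp ε * evalW u = evalW (ctw ε u) * tp ε := by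
  cases ε
  · show 1 * _ = _ * 1
    rw [one_mul, mul_one]; rfl
  · show t * _ = evalW (u.map tw) * t
    rw [evalW_map_tw]

lemma ev_concat (w u : List L) (ε δ : Bool) :
    ev w ε * ev u δ = ev (w ++ ctw ε u) (xor ε δ) := by
  rw [ev, ev, ev, evalW_append]
  calc evalW w * tp ε * (evalW u * tp δ)
      = evalW w * ((tp ε * evalW u) * tp δ) := by group
    _ = evalW w * ((evalW (ctw ε u) * tp ε) * tp δ) := by rw [tp_evalW]
    _ = evalW w * evalW (ctw ε u) * (tp ε * tp δ) := by group
    _ = evalW w * evalW (ctw ε u) * tp (xor ε δ) := by rw [tp_mul]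

lemma pow_ev {w : List L} {ε : Bool} (halt : Alt w) (hne : w ≠ [])
    (hk : ∀ x ∈ w.getLast?, ∀ y ∈ w.head?, kind x ≠ kind y) (n : ℕ) :
    ∃ u δ, Alt u ∧ ev w ε ^ (n + 1) = ev u δ ∧ u.length = (n + 1) * w.length ∧
      u.head? = w.head? := by
  induction n with
  | zero => exact ⟨w, ε, halt, pow_one _, (one_mul _).symm, rfl⟩
  | succ m ih =>
    obtain ⟨u, δ, hu, hev, hlen, hhead⟩ := ih
    refine ⟨w ++ ctw ε u, xor ε δ, ?_, ?_, ?_, ?_⟩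
    · refine List.isChain_append.2 ⟨halt, alt_ctw ε hu, ?_⟩
      intro x hx y hy
      obtain ⟨y₀, hy₀, hky⟩ := head_ctw hy
      rw [hky]
      exact hk x hx y₀ (hhead ▸ hy₀)
    · rw [pow_succ', hev, ev_concat]
    · rw [List.length_append, length_ctw, hlen]
      ring
    · exact List.head?_append_of_ne_nil _ hne

lemma not_finord {w : List L} {ε : Bool} (halt : Alt w) (hne : w ≠ [])
    (hk : ∀ x ∈ w.getLast?, ∀ y ∈ w.head?, kind x ≠ kind y) :
    ¬ IsOfFinOrder (ev w ε) := by
  intro hf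
  obtain ⟨n, hpos, h1⟩ := hf.exists_pow_eq_one
  obtain ⟨m, rfl⟩ : ∃ m, n = m + 1 := ⟨n - 1, (Nat.succ_pred_eq_of_pos hpos).symm⟩
  obtain ⟨u, δ, hu, hev, hlen, -⟩ := pow_ev (ε := ε) halt hne hk m
  rw [h1] at hev
  have h2 := nf_ev u δ hu
  rw [← hev, nf_one] at h2
  have hu0 : u = [] := (congrArg Prod.fst h2).symm
  rw [hu0] at hlen
  have hw0 : w.length = 0 := by
    have h5 := hlen.symm
    simpa using h5
  exact hne (List.eq_nil_of_length_eq_zero hw0)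

/-! ### Conjugation helpers -/

lemma conj_pow_eq (c g : P) : ∀ n : ℕ, (c⁻¹ * g * c) ^ n = c⁻¹ * g ^ n * c := by
  intro n
  induction n with
  | zero => group
  | succ m ihm => rw [pow_succ, pow_succ, ihm]; group

lemma conj_finord {c g : P} (h : IsOfFinOrder g) : IsOfFinOrder (c⁻¹ * g * c) := by
  obtain ⟨n, hn, h1⟩ := h.exists_pow_eq_one
  refine isOfFinOrder_iff_pow_eq_one.2 ⟨n, hn, ?_⟩
  rw [conj_pow_eq, h1]
  group

def ctwL (ε : Bool) (l : L) : L := if ε then tw l else l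

lemma tp_letter (ε : Bool) (l : L) : tp ε * letterP l = letterP (ctwL ε l) * tp ε := by
  cases ε
  · show 1 * _ = _ * 1
    rw [one_mul, mul_one]; rfl
  · show t * letterP l = letterP (tw l) * t
    exact (htl l).symm

lemma kind_ctwL (ε : Bool) (l : L) : kind (ctwL ε l) = kind l := by
  cases ε <;> simp [ctwL, kind_tw]

lemma eq_B_of_kind {l : L} (h : kind l = true) : l = .B := by
  cases l <;> simp_all [kind]

lemma h4 : a ^ 2 * a ^ 2 = a := by
  rw [← pow_add]
  show a ^ 4 = a
  rw [pow_succ, ha, one_mul]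

lemma mulA {p q : L} (hp : kind p = false) (hq : kind q = false) :
    letterP p * letterP q = 1 ∨
      ∃ m, kind m = false ∧ letterP p * letterP q = letterP m := by
  cases p with
  | B => simp [kind] at hp
  | A1 =>
    cases q with
    | B => simp [kind] at hq
    | A1 => exact Or.inr ⟨.A2, rfl, (pow_two a).symm⟩
    | A2 =>
      refine Or.inl ?_
      show a * a ^ 2 = 1
      rw [← pow_succ', ha]
  | A2 =>
    cases q with
    | B => simp [kind] at hq
    | A1 =>
      refine Or.inl ?_
      show a ^ 2 * a = 1
      rw [← pow_succ, ha]
    | A2 => exact Or.inr ⟨.A1, rfl, h4⟩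

/-! ### The short words -/

lemma short_words : ∀ (w : List L) (ε : Bool), w.length ≤ 1 →
    ev w ε ∈ ({1, a, a ^ 2, t, a * t, a ^ 2 * t, b, b * t} : Set P)
  | [], false, _ => by simp [ev, evalW, tp]
  | [], true, _ => by simp [ev, evalW, tp]
  | [.A1], false, _ => by simp [ev, evalW, tp, letterP]
  | [.A1], true, _ => by simp [ev, evalW, tp, letterP]
  | [.A2], false, _ => by simp [ev, evalW, tp, letterP]
  | [.A2], true, _ => by simp [ev, evalW, tp, letterP]
  | [.B], false, _ => by simp [ev, evalW, tp, letterP]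
  | [.B], true, _ => by simp [ev, evalW, tp, letterP]
  | _ :: _ :: _, _, h => by simp at h


/-! ### Main induction -/

lemma step_reduce {N : ℕ}
    (ih : ∀ (w : List L) (ε : Bool), Alt w → w.length ≤ N → IsOfFinOrder (ev w ε) →
      ∃ x ∈ ({1, a, a ^ 2, t, a * t, a ^ 2 * t, b, b * t} : Set P), IsConj x (ev w ε))
    {u : List L} {ε : Bool} (altu : Alt u) (hlenu : u.length ≤ N) {g c : P}
    (hfin : IsOfFinOrder g) (hg' : c⁻¹ * g * c = ev u ε) :
    ∃ x ∈ ({1, a, a ^ 2, t, a * t, a ^ 2 * t, b, b * t} : Set P), IsConj x g := by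
  have hfin' : IsOfFinOrder (ev u ε) := hg' ▸ conj_finord hfin
  obtain ⟨x, hx, hconj⟩ := ih u ε altu hlenu hfin'
  refine ⟨x, hx, hconj.trans ?_⟩
  rw [← hg']
  exact isConj_iff.2 ⟨c, by group⟩

lemma main_aux : ∀ (N : ℕ) (w : List L) (ε : Bool), Alt w → w.length ≤ N →
    IsOfFinOrder (ev w ε) →
    ∃ x ∈ ({1, a, a ^ 2, t, a * t, a ^ 2 * t, b, b * t} : Set P), IsConj x (ev w ε) := by
  intro N
  induction N with
  | zero =>
    intro w ε _ hlen _
    exact ⟨ev w ε, short_words w ε (by omega), IsConj.refl _⟩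
  | succ N ih =>
    intro w ε halt hlen hfin
    rcases w with _ | ⟨l0, w1⟩
    · exact ⟨ev [] ε, short_words [] ε (by simp), IsConj.refl _⟩
    rcases w1 with _ | ⟨l1, r⟩
    · exact ⟨ev [l0] ε, short_words [l0] ε (by simp), IsConj.refl _⟩
    obtain ⟨u, lN, hdec⟩ : ∃ u lN, l1 :: r = u ++ [lN] :=
      ⟨_, _, (List.dropLast_append_getLast (List.cons_ne_nil l1 r)).symm⟩
    rw [hdec] at halt hlen hfin ⊢
    by_cases hkk : kind l0 = kind lN
    · -- first and last letters have the same kind: conjugate to a shorter word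
      -- basic structure facts
      have haltu : Alt u := (List.isChain_append.1 halt.tail).1
      have hlenu : u.length ≤ N := by
        simp [List.length_append] at hlen
        omega
      -- the key conjugation computation
      have hg' : (letterP l0)⁻¹ * ev (l0 :: (u ++ [lN])) ε * letterP l0
          = evalW u * (letterP lN * letterP (ctwL ε l0)) * tp ε := by
        rw [ev_cons, inv_mul_cancel_left, ev, evalW_append,
          show evalW [lN] = letterP lN from by simp [evalW],
          mul_assoc, mul_assoc, tp_letter]
        group
      by_cases hk0 : kind l0 = true
      · -- both ends are b
        have hl0B : l0 = .B := eq_B_of_kind hk0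
        have hlNB : lN = .B := eq_B_of_kind (by rw [← hkk]; exact hk0)
        have hctw : ctwL ε l0 = .B := by
          rw [hl0B]; cases ε <;> rfl
        have hbb : letterP lN * letterP (ctwL ε l0) = 1 := by
          rw [hlNB, hctw]
          show b * b = 1
          rw [← pow_two, hb]
        have hg'' : (letterP l0)⁻¹ * ev (l0 :: (u ++ [lN])) ε * letterP l0 = ev u ε := by
          rw [hg', hbb, mul_one]; rfl
        exact step_reduce ih haltu hlenu hfin hg''
      · -- both ends are rotations
        have hk0' : kind l0 = false := by
          cases h : kind l0
          · rfl
          · exact absurd h hk0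
        have hkN : kind lN = false := by rw [← hkk]; exact hk0'
        have hkc : kind (ctwL ε l0) = false := by rw [kind_ctwL]; exact hk0'
        rcases mulA hkN hkc with hm | ⟨m, hmk, hm⟩
        · -- the rotations cancel
          have hg'' : (letterP l0)⁻¹ * ev (l0 :: (u ++ [lN])) ε * letterP l0 = ev u ε := by
            rw [hg', hm, mul_one]; rfl
          exact step_reduce ih haltu hlenu hfin hg''
        · -- the rotations merge: the result is cyclically reduced, contradiction
          exfalso
          have hune : u ≠ [] := by
            intro h0
            rw [h0] at halt
            have := (alt_cons.1 halt).1 lN rfl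
            rw [hkk] at this
            exact this rfl
          have hlastu : ∀ x ∈ u.getLast?, kind x = true := by
            intro x hx
            have := (List.isChain_append.1 halt.tail).2.2 x hx lN rfl
            cases h : kind x
            · rw [h, hkN] at this
              exact absurd rfl this
            · rfl
          have hheadu : ∀ y ∈ u.head?, kind y = true := by
            intro y hy
            have hy' : y ∈ (u ++ [lN]).head? := by
              rw [List.head?_append_of_ne_nil _ hune]
              exact hy
            have := (alt_cons.1 halt).1 y hy'
            rw [hk0'] at this
            cases h : kind y
            · rw [h] at this
              exact absurd rfl this
            · rfl
          have haltm : Alt (u ++ [m]) := by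
            refine List.isChain_append.2 ⟨haltu, List.isChain_singleton _, ?_⟩
            intro x hx y hy
            have hym : y = m := (by simpa using hy : m = y).symm
            rw [hym, hlastu x hx, hmk]
            simp
          have hg'' : (letterP l0)⁻¹ * ev (l0 :: (u ++ [lN])) ε * letterP l0
              = ev (u ++ [m]) ε := by
            rw [hg', hm, ev, evalW_append,
              show evalW [m] = letterP m from by simp [evalW]]
          have hfin'' : IsOfFinOrder (ev (u ++ [m]) ε) := hg'' ▸ conj_finord hfin
          refine not_finord haltm (by simp) ?_ hfin''
          intro x hx y hy
          have hxm : x = m := by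
            rw [List.getLast?_concat] at hx
            exact (by simpa using hx : m = x).symm
          have hy' : y ∈ u.head? := by
            rw [List.head?_append_of_ne_nil _ hune] at hy
            exact hy
          rw [hxm, hmk, hheadu y hy']
          simp
    · -- first and last letters have different kinds: cyclically reduced, contradiction
      exfalso
      refine not_finord halt (List.cons_ne_nil _ _) ?_ hfin
      intro x hx y hy
      have hyl0 : y = l0 := (by simpa using hy : l0 = y).symm
      have hxlN : x = lN := by
        rw [show l0 :: (u ++ [lN]) = (l0 :: u) ++ [lN] from rfl, List.getLast?_concat] at hx
        exact (by simpa using hx : lN = x).symm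
      rw [hyl0, hxlN]
      exact fun h => hkk h.symm

/-- Every finite-order element of `PGL(2,ℤ)` is conjugate to one of
`1, a, a², t, at, a²t, b, bt`. -/
theorem torsion_conjugacy_classes (g : P) (hg : IsOfFinOrder g) :
    ∃ x ∈ ({1, a, a ^ 2, t, a * t, a ^ 2 * t, b, b * t} : Set P), IsConj x g := by
  have hgev : g = ev (nf g).1.1 (nf g).1.2 := (ev2_nf g).symm
  rw [hgev] at hg ⊢
  exact main_aux (nf g).1.1.length (nf g).1.1 (nf g).1.2 (nf g).2 le_rfl hg

end PGLpres
end
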